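/- Let W be a finite set, V = W ⊔ W the disjoint union of two copies of W (elements of the second copy written w̄), and f : V → W the map sending both copies of w to w. Let G be a graph with vertex set V. Define the strong quotient G//f as the graph with vertex set W having an edge between w and w' iff G has an edge between w and w' and also an edge between w̄ and w̄'. Then #Conn(G) ≤ #Conn(G/f) + #Conn(G//f). -/

import Mathlib

open SimpleGraph

private lemma reachable_const {X : Type} {H : SimpleGraph X} {β : Sort*} {f : X → β}
    (h : ∀ v w, H.Adj v w → f v = f w) {v w : X} (hr : H.Reachable v w) : f v = f w := by
  obtain ⟨p⟩ := hr
  induction p with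
  | nil => rfl
  | cons h' p ih => exact (h _ _ h').trans ih

/-- lift a function constant on adjacency to components -/
private def compLift {X : Type} (H : SimpleGraph X) {β : Sort*} (f : X → β)
    (h : ∀ v w, H.Adj v w → f v = f w) : H.ConnectedComponent → β :=
  SimpleGraph.ConnectedComponent.lift f (fun v w p _ => reachable_const h ⟨p⟩)

@[simp] private lemma compLift_mk {X : Type} (H : SimpleGraph X) {β : Sort*} (f : X → β)
    (h : ∀ v w, H.Adj v w → f v = f w) (v : X) :
    compLift H f h (H.connectedComponentMk v) = f v := rfl

private lemma reach_surgery {X : Type} {H : SimpleGraph X} {a b u v : X}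
    (h : (H ⊔ SimpleGraph.edge a b).Reachable u v) :
    H.Reachable u v ∨ (H.Reachable u a ∧ H.Reachable b v) ∨
      (H.Reachable u b ∧ H.Reachable a v) := by
  obtain ⟨p⟩ := h
  induction p with
  | nil => exact Or.inl (Reachable.refl _)
  | @cons u x v hadj p ih =>
    rcases hadj with hH | hE
    · rcases ih with h1 | ⟨h1, h2⟩ | ⟨h1, h2⟩
      · exact Or.inl (hH.reachable.trans h1)
      · exact Or.inr (Or.inl ⟨hH.reachable.trans h1, h2⟩)
      · exact Or.inr (Or.inr ⟨hH.reachable.trans h1, h2⟩)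
    · rw [edge_adj] at hE
      obtain ⟨⟨rfl, rfl⟩ | ⟨rfl, rfl⟩, hne⟩ := hE
      · rcases ih with h1 | ⟨h1, h2⟩ | ⟨h1, h2⟩
        · exact Or.inr (Or.inl ⟨Reachable.refl _, h1⟩)
        · exact Or.inl (h1.symm.trans h2)
        · exact Or.inl h2
      · rcases ih with h1 | ⟨h1, h2⟩ | ⟨h1, h2⟩
        · exact Or.inr (Or.inr ⟨Reachable.refl _, h1⟩)
        · exact Or.inl h2
        · exact Or.inl (h1.symm.trans h2)

private lemma card_conn_sup_edge {X : Type} [Finite X] (H : SimpleGraph X) (a b : X) :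
    Nat.card H.ConnectedComponent ≤
      Nat.card (H ⊔ SimpleGraph.edge a b).ConnectedComponent + 1 := by
  classical
  set K := H ⊔ SimpleGraph.edge a b with hK
  have hadj : ∀ v w, H.Adj v w → K.connectedComponentMk v = K.connectedComponentMk w :=
    fun v w h => SimpleGraph.ConnectedComponent.sound (SimpleGraph.Adj.reachable (by exact Or.inl h))
  let q : H.ConnectedComponent → K.ConnectedComponent :=
    compLift H (fun v => K.connectedComponentMk v) hadj
  let f : H.ConnectedComponent → K.ConnectedComponent ⊕ Unit :=
    fun C => if C = H.connectedComponentMk b then Sum.inr () else Sum.inl (q C)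
  have hf : Function.Injective f := by
    intro C D hCD
    simp only [f] at hCD
    by_cases hC : C = H.connectedComponentMk b
    · by_cases hD : D = H.connectedComponentMk b
      · exact hC.trans hD.symm
      · rw [if_pos hC, if_neg hD] at hCD; exact absurd hCD (by simp)
    · by_cases hD : D = H.connectedComponentMk b
      · rw [if_neg hC, if_pos hD] at hCD; exact absurd hCD (by simp)
      · rw [if_neg hC, if_neg hD] at hCD
        have hq : q C = q D := Sum.inl.inj hCD
        obtain ⟨u, rfl⟩ := C.exists_rep
        obtain ⟨v, rfl⟩ := D.exists_rep
        have : K.Reachable u v := by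
          have := hq
          simp only [q, compLift_mk] at this
          exact (SimpleGraph.ConnectedComponent.eq).mp this
        rcases reach_surgery this with h1 | ⟨h1, h2⟩ | ⟨h1, h2⟩
        · exact ConnectedComponent.sound h1
        · exact absurd (ConnectedComponent.sound h2.symm) hD
        · exact absurd (ConnectedComponent.sound h1) hC
  calc Nat.card H.ConnectedComponent
      ≤ Nat.card (K.ConnectedComponent ⊕ Unit) := Nat.card_le_card_of_injective f hf
    _ = Nat.card K.ConnectedComponent + 1 := by simp [Nat.card_sum]

private lemma card_le_conn_add_edges {X : Type} [Finite X] (H : SimpleGraph X) :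
    Nat.card X ≤ Nat.card H.ConnectedComponent + Nat.card H.edgeSet := by
  classical
  suffices h : ∀ n (H : SimpleGraph X), Nat.card H.edgeSet = n →
      Nat.card X ≤ Nat.card H.ConnectedComponent + n from h _ H rfl
  intro n
  induction n using Nat.strong_induction_on with
  | _ n ih =>
    intro H hn
    by_cases hbot : H = ⊥
    · subst hbot
      have hbij : Function.Bijective ((⊥ : SimpleGraph X).connectedComponentMk) := by
        constructor
        · intro u v h
          exact SimpleGraph.reachable_bot.mp ((SimpleGraph.ConnectedComponent.eq).mp h)
        · exact Quot.mk_surjective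
      have := Nat.card_eq_of_bijective _ hbij
      omega
    · obtain ⟨e, he⟩ := (edgeSet_nonempty).mpr hbot
      revert he
      induction e using Sym2.ind with
      | _ a b =>
        intro he
        have hab : H.Adj a b := (H.mem_edgeSet).mp he
        set H' := H.deleteEdges {s(a, b)} with hH'
        have hE' : H'.edgeSet = H.edgeSet \ {s(a, b)} := edgeSet_deleteEdges _
        have hsup : H' ⊔ SimpleGraph.edge a b = H := by
          ext x y
          simp only [sup_adj, hH', deleteEdges_adj, edge_adj, Set.mem_singleton_iff]
          constructor
          · rintro (⟨h1, _⟩ | ⟨(⟨rfl, rfl⟩ | ⟨rfl, rfl⟩), _⟩)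
            · exact h1
            · exact hab
            · exact hab.symm
          · intro h
            by_cases hxy : s(x, y) = s(a, b)
            · right
              rw [Sym2.eq_iff] at hxy
              exact ⟨hxy, h.ne⟩
            · exact Or.inl ⟨h, hxy⟩
        have hcard : Nat.card H'.edgeSet + 1 = n := by
          rw [← hn, Nat.card_coe_set_eq, Nat.card_coe_set_eq, hE']
          have heq : H.edgeSet = insert (s(a, b)) (H.edgeSet \ {s(a, b)}) := by
            rw [Set.insert_diff_singleton, Set.insert_eq_of_mem he]
          conv_rhs => rw [heq]
          rw [Set.ncard_insert_of_notMem (by simp)]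
        have ihH := ih _ (by omega) H' rfl
        have hc := card_conn_sup_edge H' a b
        rw [hsup] at hc
        omega

/-- Lemma 3.2: for a graph `G` on `V = W ⊔ W` and `f : V → W` the canonical projection,
`#Conn(G) ≤ #Conn(G/f) + #Conn(G//f)`, where the strong quotient `G//f` has an edge between
`w` and `w'` iff `G` has both an edge between `w` and `w'` and one between `w̄` and `w̄'`. -/
theorem components_strong_quotient_bound (W : Type) [Fintype W] (G : SimpleGraph (W ⊕ W)) :
    Nat.card G.ConnectedComponent ≤
      Nat.card (SimpleGraph.fromRel (fun w w' => ∃ v v', G.Adj v v' ∧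
          Sum.elim id id v = w ∧ Sum.elim id id v' = w')).ConnectedComponent
        + Nat.card (SimpleGraph.fromRel (fun w w' =>
            G.Adj (Sum.inl w) (Sum.inl w') ∧ G.Adj (Sum.inr w) (Sum.inr w'))).ConnectedComponent := by
  classical
  set Q := SimpleGraph.fromRel (fun w w' => ∃ v v', G.Adj v v' ∧
      Sum.elim id id v = w ∧ Sum.elim id id v' = w') with hQ
  set S := SimpleGraph.fromRel (fun w w' : W =>
      G.Adj (Sum.inl w) (Sum.inl w') ∧ G.Adj (Sum.inr w) (Sum.inr w')) with hS
  -- the projection map on components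
  have hp : ∀ v v', G.Adj v v' →
      Q.connectedComponentMk (Sum.elim id id v) = Q.connectedComponentMk (Sum.elim id id v') := by
    intro v v' h
    by_cases hpe : (Sum.elim id id v : W) = Sum.elim id id v'
    · rw [hpe]
    · refine SimpleGraph.ConnectedComponent.sound (SimpleGraph.Adj.reachable ?_)
      rw [hQ, SimpleGraph.fromRel_adj]
      exact ⟨hpe, Or.inl ⟨v, v', h, rfl, rfl⟩⟩
  let p : G.ConnectedComponent → Q.ConnectedComponent :=
    compLift G (fun v => Q.connectedComponentMk (Sum.elim id id v)) hp
  -- the auxiliary graph on the components of G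
  set Γ : SimpleGraph G.ConnectedComponent := SimpleGraph.fromRel (fun C D =>
    ∃ w, G.connectedComponentMk (Sum.inl w) = C ∧ G.connectedComponentMk (Sum.inr w) = D)
    with hΓ
  have K1 : ∀ w : W, Γ.Reachable (G.connectedComponentMk (Sum.inl w))
      (G.connectedComponentMk (Sum.inr w)) := by
    intro w
    by_cases h : G.connectedComponentMk (Sum.inl w) = G.connectedComponentMk (Sum.inr w)
    · rw [h]
    · refine SimpleGraph.Adj.reachable ?_
      rw [hΓ, SimpleGraph.fromRel_adj]
      exact ⟨h, Or.inl ⟨w, rfl, rfl⟩⟩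
  have hv : ∀ v : W ⊕ W, Γ.Reachable
      (G.connectedComponentMk (Sum.inl (Sum.elim id id v))) (G.connectedComponentMk v) := by
    intro v
    cases v with
    | inl w => exact SimpleGraph.Reachable.refl _
    | inr w => exact K1 w
  have K2aux : ∀ w w' : W, (∃ v v', G.Adj v v' ∧
      Sum.elim id id v = w ∧ Sum.elim id id v' = w') →
      Γ.Reachable (G.connectedComponentMk (Sum.inl w)) (G.connectedComponentMk (Sum.inl w')) := by
    rintro w w' ⟨v, v', h, rfl, rfl⟩
    have e1 : G.connectedComponentMk v = G.connectedComponentMk v' :=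
      SimpleGraph.ConnectedComponent.sound h.reachable
    have r1 := hv v
    rw [e1] at r1
    exact r1.trans (hv v').symm
  have K2 : ∀ w w' : W, Q.Adj w w' →
      Γ.Reachable (G.connectedComponentMk (Sum.inl w)) (G.connectedComponentMk (Sum.inl w')) := by
    intro w w' h
    rw [hQ, SimpleGraph.fromRel_adj] at h
    rcases h.2 with h1 | h1
    · exact K2aux _ _ h1
    · exact (K2aux _ _ h1).symm
  have K3 : ∀ w w' : W, Q.Reachable w w' →
      Γ.Reachable (G.connectedComponentMk (Sum.inl w)) (G.connectedComponentMk (Sum.inl w')) := by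
    intro w w' h
    obtain ⟨pa⟩ := h
    induction pa with
    | nil => exact SimpleGraph.Reachable.refl _
    | cons h' pa ih => exact (K2 _ _ h').trans ih
  have hpp : ∀ C D, Γ.Adj C D → p C = p D := by
    intro C D h
    rw [hΓ, SimpleGraph.fromRel_adj] at h
    rcases h.2 with ⟨w, rfl, rfl⟩ | ⟨w, rfl, rfl⟩ <;> rfl
  let pbar : Γ.ConnectedComponent → Q.ConnectedComponent := compLift Γ p hpp
  have hinj : Function.Injective pbar := by
    intro A B h
    obtain ⟨C, rfl⟩ := A.exists_rep
    obtain ⟨D, rfl⟩ := B.exists_rep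
    obtain ⟨u, rfl⟩ := C.exists_rep
    obtain ⟨v, rfl⟩ := D.exists_rep
    have h' : Q.connectedComponentMk (Sum.elim id id u)
        = Q.connectedComponentMk (Sum.elim id id v) := h
    have hr : Q.Reachable (Sum.elim id id u) (Sum.elim id id v) :=
      (SimpleGraph.ConnectedComponent.eq).mp h'
    have : Γ.Reachable (G.connectedComponentMk u) (G.connectedComponentMk v) :=
      ((hv u).symm.trans (K3 _ _ hr)).trans (hv v)
    exact SimpleGraph.ConnectedComponent.sound this
  have card1 : Nat.card Γ.ConnectedComponent ≤ Nat.card Q.ConnectedComponent :=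
    Nat.card_le_card_of_injective pbar hinj
  -- edges of Γ are covered by the components of S
  have hg : ∀ w w' : W, S.Adj w w' →
      (s(G.connectedComponentMk (Sum.inl w), G.connectedComponentMk (Sum.inr w))
        : Sym2 G.ConnectedComponent)
      = s(G.connectedComponentMk (Sum.inl w'), G.connectedComponentMk (Sum.inr w')) := by
    intro w w' h
    rw [hS, SimpleGraph.fromRel_adj] at h
    have h1 : G.Adj (Sum.inl w) (Sum.inl w') ∧ G.Adj (Sum.inr w) (Sum.inr w') := by
      rcases h.2 with h1 | h1
      · exact h1
      · exact ⟨h1.1.symm, h1.2.symm⟩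
    rw [SimpleGraph.ConnectedComponent.sound h1.1.reachable,
      SimpleGraph.ConnectedComponent.sound h1.2.reachable]
  let g : S.ConnectedComponent → Sym2 G.ConnectedComponent :=
    compLift S (fun w => s(G.connectedComponentMk (Sum.inl w),
      G.connectedComponentMk (Sum.inr w))) hg
  have cover : ∀ e ∈ Γ.edgeSet, e ∈ Set.range g := by
    intro e he
    induction e using Sym2.ind with
    | _ C D =>
      rw [SimpleGraph.mem_edgeSet, hΓ, SimpleGraph.fromRel_adj] at he
      rcases he.2 with ⟨w, rfl, rfl⟩ | ⟨w, rfl, rfl⟩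
      · exact ⟨S.connectedComponentMk w, rfl⟩
      · exact ⟨S.connectedComponentMk w, Sym2.eq_swap⟩
  let F : Γ.edgeSet → S.ConnectedComponent := fun e => (cover e.1 e.2).choose
  have hgF : ∀ e : Γ.edgeSet, g (F e) = e.1 := fun e => (cover e.1 e.2).choose_spec
  have hFinj : Function.Injective F := by
    intro e1 e2 h
    apply Subtype.ext
    rw [← hgF e1, ← hgF e2, h]
  have card2 : Nat.card Γ.edgeSet ≤ Nat.card S.ConnectedComponent :=
    Nat.card_le_card_of_injective F hFinj
  calc Nat.card G.ConnectedComponent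
      ≤ Nat.card Γ.ConnectedComponent + Nat.card Γ.edgeSet := card_le_conn_add_edges Γ
    _ ≤ Nat.card Q.ConnectedComponent + Nat.card S.ConnectedComponent :=
        Nat.add_le_add card1 card2
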